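/- Let U ⊆ ℍ^m ≅ ℝ^{4m} be open, u = (u^1, …, u^Q) : U → ℝ^Q a C² map, and let I, J, K be C¹ maps from ℝ^Q to the space of Q×Q real matrices, with entries I_α^β, J_α^β, K_α^β (so that (I(y)w)^β = Σ_α I_α^β(y) w^α). Suppose that at every x ∈ U the differential satisfies du_x = I(u(x))∘du_x∘i + J(u(x))∘du_x∘j + K(u(x))∘du_x∘k, where i, j, k act on ℍ^m by componentwise left quaternion multiplication. Let (e_1, …, e_{4m}) be the standard orthonormal basis of ℝ^{4m} and set c^i_{ℓs} := ⟨i(e_ℓ), e_s⟩, c^j_{ℓs} := ⟨j(e_ℓ), e_s⟩, c^k_{ℓs} := ⟨k(e_ℓ), e_s⟩ (these are antisymmetric in (ℓ, s)). Then for every β and every x ∈ U: Σ_{ℓ=1}^{4m} ∂²u^β/∂x_ℓ²(x) = Σ_{ℓ,s=1}^{4m} Σ_{α=1}^{Q} [ c^i_{ℓs} ∂_ℓ(I_α^β∘u)(x) ∂_s u^α(x) + c^j_{ℓs} ∂_ℓ(J_α^β∘u)(x) ∂_s u^α(x) + c^k_{ℓs} ∂_ℓ(K_α^β∘u)(x)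 ∂_s u^α(x) ]. (Flat-domain form of the Jacobian structure of the triholomorphic map equation, Proposition 3.1.) -/

import Mathlib

open scoped Quaternion RealInnerProductSpace

/-- The quaternion units `1, i, j, k` as a function on `Fin 4`. -/
noncomputable def quatUnit : Fin 4 → ℍ[ℝ] :=
  ![1, ⟨0, 1, 0, 0⟩, ⟨0, 0, 1, 0⟩, ⟨0, 0, 0, 1⟩]

/-- The quaternion unit `i`. -/
noncomputable def Quat.i : ℍ[ℝ] := ⟨0, 1, 0, 0⟩
/-- The quaternion unit `j`. -/
noncomputable def Quat.j : ℍ[ℝ] := ⟨0, 0, 1, 0⟩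
/-- The quaternion unit `k`. -/
noncomputable def Quat.k : ℍ[ℝ] := ⟨0, 0, 0, 1⟩

/-- The standard orthonormal basis of `ℍ^m ≅ ℝ^{4m}`, indexed by `Fin m × Fin 4`. -/
noncomputable def stdBasisQ (m : ℕ) (p : Fin m × Fin 4) : Fin m → ℍ[ℝ] :=
  Pi.single p.1 (quatUnit p.2)

/-- The coefficient `⟨q·e_ℓ, e_s⟩` of left multiplication by a fixed quaternion `q`
in the standard orthonormal basis of `ℍ^m ≅ ℝ^{4m}`. -/
noncomputable def multCoeff (m : ℕ) (q : ℍ[ℝ]) (l s : Fin m × Fin 4) : ℝ :=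
  ∑ n : Fin m, ⟪q * stdBasisQ m l n, stdBasisQ m s n⟫

/- ## Auxiliary lemmas -/

lemma quat_expand (p : ℍ[ℝ]) : p = ∑ b : Fin 4, ⟪p, quatUnit b⟫ • quatUnit b := by
  simp [Fin.sum_univ_four, quatUnit, Quaternion.inner_def]
  ext <;> simp
  · erw [Quaternion.re_smul, Quaternion.re_smul, Quaternion.re_smul]; simp
  · erw [Quaternion.imI_smul, Quaternion.imI_smul, Quaternion.imI_smul]; simp
  · erw [Quaternion.imJ_smul, Quaternion.imJ_smul, Quaternion.imJ_smul]; simp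
  · erw [Quaternion.imK_smul, Quaternion.imK_smul, Quaternion.imK_smul]; simp

lemma inner_mul_antisymm (q a b : ℍ[ℝ]) (hq : q.re = 0) :
    ⟪q * a, b⟫ = -⟪q * b, a⟫ := by
  simp [Quaternion.inner_def, Quaternion.re_mul, hq]
  ring

lemma multCoeff_antisymm (m : ℕ) (q : ℍ[ℝ]) (hq : q.re = 0) (l s : Fin m × Fin 4) :
    multCoeff m q l s = - multCoeff m q s l := by
  unfold multCoeff
  rw [← Finset.sum_neg_distrib]
  exact Finset.sum_congr rfl fun n _ => inner_mul_antisymm _ _ _ hq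

lemma mul_expand (m : ℕ) (q : ℍ[ℝ]) (l : Fin m × Fin 4) :
    (fun n => q * stdBasisQ m l n) = ∑ s : Fin m × Fin 4, multCoeff m q l s • stdBasisQ m s := by
  funext n
  rw [Finset.sum_apply]
  rw [Fintype.sum_prod_type]
  rw [Finset.sum_eq_single n (fun a _ ha => by
    simp [stdBasisQ, Pi.single_eq_of_ne' ha]) (by simp)]
  have hc : ∀ b : Fin 4, multCoeff m q l (n, b)
      = ⟪q * stdBasisQ m l n, quatUnit b⟫ := by
    intro b
    unfold multCoeff
    rw [Finset.sum_eq_single n (fun n' _ hn' => by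
      simp [stdBasisQ, Pi.single_eq_of_ne hn']) (by simp)]
    simp [stdBasisQ]
  simp only [hc, Pi.smul_apply, stdBasisQ, Pi.single_eq_same]
  exact quat_expand _

noncomputable def evalCLM {m Q : ℕ} (v : Fin m → ℍ[ℝ]) (β : Fin Q) :
    ((Fin m → ℍ[ℝ]) →L[ℝ] (Fin Q → ℝ)) →L[ℝ] ℝ :=
  (ContinuousLinearMap.proj β).comp (ContinuousLinearMap.apply ℝ (Fin Q → ℝ) v)

lemma helper2 {m Q : ℕ} {u : (Fin m → ℍ[ℝ]) → (Fin Q → ℝ)} {x : Fin m → ℍ[ℝ]}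
    (hfd : DifferentiableAt ℝ (fderiv ℝ u) x) (v w : Fin m → ℍ[ℝ]) (β : Fin Q) :
    fderiv ℝ (fun z => fderiv ℝ u z v β) x w = fderiv ℝ (fderiv ℝ u) x w v β := by
  have h1 := hfd.hasFDerivAt.clm_apply (hasFDerivAt_const v x)
  have h2 := ((hasFDerivAt_apply (𝕜 := ℝ) β (fderiv ℝ u x v)).comp x h1).fderiv
  rw [show (fun z => fderiv ℝ u z v β) = (fun f : Fin Q → ℝ => f β) ∘ (fun z => fderiv ℝ u z v) from rfl, h2]
  simp

lemma helper1 {m Q : ℕ} {u : (Fin m → ℍ[ℝ]) → (Fin Q → ℝ)} {x : Fin m → ℍ[ℝ]}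
    (hfd : DifferentiableAt ℝ (fderiv ℝ u) x) (v : Fin m → ℍ[ℝ]) (β : Fin Q) :
    DifferentiableAt ℝ (fun z => fderiv ℝ u z v β) x := by
  have h := differentiableAt_pi.1 (hfd.clm_apply (differentiableAt_const v)) β
  exact h

lemma hsym {m Q : ℕ} {u : (Fin m → ℍ[ℝ]) → (Fin Q → ℝ)} {x : Fin m → ℍ[ℝ]}
    (hx2 : ContDiffAt ℝ 2 u x) (v w : Fin m → ℍ[ℝ]) (β : Fin Q) :
    fderiv ℝ (fun z => fderiv ℝ u z v β) x w = fderiv ℝ (fun z => fderiv ℝ u z w β) x v := by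
  have hfd : DifferentiableAt ℝ (fderiv ℝ u) x :=
    (hx2.fderiv_right (m := 1) (by norm_num)).differentiableAt (by norm_num)
  rw [helper2 hfd, helper2 hfd]
  rw [(hx2.isSymmSndFDerivAt (by norm_num)).eq w v]

lemma antisym_sum3 {ι κ : Type*} [Fintype ι] [Fintype κ] (c : ι → ι → ℝ) (M : κ → ℝ)
    (S : ι → ι → κ → ℝ) (hc : ∀ l s, c l s = -c s l) (hS : ∀ l s α, S l s α = S s l α) :
    ∑ l : ι, ∑ s : ι, ∑ α : κ, c l s * (M α * S l s α) = 0 := by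
  have key : (∑ l : ι, ∑ s : ι, ∑ α : κ, c l s * (M α * S l s α))
      = -(∑ l : ι, ∑ s : ι, ∑ α : κ, c l s * (M α * S l s α)) := by
    conv_lhs => rw [Finset.sum_comm]
    rw [← Finset.sum_neg_distrib]
    refine Finset.sum_congr rfl fun s _ => ?_
    rw [← Finset.sum_neg_distrib]
    refine Finset.sum_congr rfl fun l _ => ?_
    rw [← Finset.sum_neg_distrib]
    refine Finset.sum_congr rfl fun α _ => ?_
    rw [hc s l, hS s l α]
    ring
  linarith

lemma fderiv_cmul {E : Type*} [NormedAddCommGroup E] [NormedSpace ℝ E] {f h : E → ℝ} {x : E}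
    (hf : DifferentiableAt ℝ f x) (hh : DifferentiableAt ℝ h x) (c : ℝ) (w : E) :
    fderiv ℝ (fun z => c * (f z * h z)) x w
      = c * (fderiv ℝ f x w * h x + f x * fderiv ℝ h x w) := by
  rw [fderiv_const_mul (a := fun z => f z * h z) (hf.mul hh) c]
  rw [ContinuousLinearMap.smul_apply, fderiv_fun_mul hf hh]
  simp only [ContinuousLinearMap.add_apply, ContinuousLinearMap.smul_apply, smul_eq_mul]
  ring
lemma diff_three {E : Type*} [NormedAddCommGroup E] [NormedSpace ℝ E]
    {f1 f2 f3 g : E → ℝ} {x : E} (h1 : DifferentiableAt ℝ f1 x) (h2 : DifferentiableAt ℝ f2 x)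
    (h3 : DifferentiableAt ℝ f3 x) (hg : DifferentiableAt ℝ g x) (c1 c2 c3 : ℝ) :
    DifferentiableAt ℝ
      (fun z => c1 * (f1 z * g z) + c2 * (f2 z * g z) + c3 * (f3 z * g z)) x :=
  (((h1.mul hg).const_mul c1).add ((h2.mul hg).const_mul c2)).add ((h3.mul hg).const_mul c3)

lemma fderiv_three {E : Type*} [NormedAddCommGroup E] [NormedSpace ℝ E]
    {f1 f2 f3 g : E → ℝ} {x : E} (h1 : DifferentiableAt ℝ f1 x) (h2 : DifferentiableAt ℝ f2 x)
    (h3 : DifferentiableAt ℝ f3 x) (hg : DifferentiableAt ℝ g x) (c1 c2 c3 : ℝ) (w : E) :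
    fderiv ℝ (fun z => c1 * (f1 z * g z) + c2 * (f2 z * g z) + c3 * (f3 z * g z)) x w
      = (c1 * fderiv ℝ f1 x w * g x + c2 * fderiv ℝ f2 x w * g x
          + c3 * fderiv ℝ f3 x w * g x)
        + (c1 * (f1 x * fderiv ℝ g x w) + c2 * (f2 x * fderiv ℝ g x w)
          + c3 * (f3 x * fderiv ℝ g x w)) := by
  rw [fderiv_fun_add (f := fun z => c1 * (f1 z * g z) + c2 * (f2 z * g z))
      (g := fun z => c3 * (f3 z * g z)) (((h1.mul hg).const_mul c1).add ((h2.mul hg).const_mul c2))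
      ((h3.mul hg).const_mul c3),
    fderiv_fun_add (f := fun z => c1 * (f1 z * g z)) (g := fun z => c2 * (f2 z * g z)) ((h1.mul hg).const_mul c1) ((h2.mul hg).const_mul c2),
    ContinuousLinearMap.add_apply, ContinuousLinearMap.add_apply,
    fderiv_cmul h1 hg, fderiv_cmul h2 hg, fderiv_cmul h3 hg]
  ring


/-- flat-domain Jacobian structure of the triholomorphic map equation:
for a `C²` solution `u : U ⊆ ℍ^m → ℝ^Q` of the triholomorphic equation with `C¹` coefficient
matrices `I, J, K`, the Laplacian of each component `u^β` equals the sum of Jacobian-type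
expressions `Σ c_{ℓs} ∂_ℓ(I_α^β ∘ u) ∂_s u^α` (and the analogous `J`- and `K`-terms). -/
theorem stmt7 {m Q : ℕ}
    (U : Set (Fin m → ℍ[ℝ])) (hU : IsOpen U)
    (u : (Fin m → ℍ[ℝ]) → (Fin Q → ℝ))
    (hu : ContDiffOn ℝ 2 u U)
    (I J K : (Fin Q → ℝ) → Fin Q → Fin Q → ℝ)
    (hI : ContDiff ℝ 1 I) (hJ : ContDiff ℝ 1 J) (hK : ContDiff ℝ 1 K)
    (htri : ∀ x ∈ U, ∀ y : Fin m → ℍ[ℝ], ∀ β : Fin Q,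
      fderiv ℝ u x y β
        = (∑ α : Fin Q, I (u x) β α * fderiv ℝ u x (fun n => Quat.i * y n) α)
          + (∑ α : Fin Q, J (u x) β α * fderiv ℝ u x (fun n => Quat.j * y n) α)
          + (∑ α : Fin Q, K (u x) β α * fderiv ℝ u x (fun n => Quat.k * y n) α)) :
    ∀ x ∈ U, ∀ β : Fin Q,
      (∑ l : Fin m × Fin 4,
          fderiv ℝ (fun z => fderiv ℝ u z (stdBasisQ m l) β) x (stdBasisQ m l))
        = ∑ l : Fin m × Fin 4, ∑ s : Fin m × Fin 4, ∑ α : Fin Q,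
            (multCoeff m Quat.i l s
                * fderiv ℝ (fun z => I (u z) β α) x (stdBasisQ m l)
                * fderiv ℝ u x (stdBasisQ m s) α
              + multCoeff m Quat.j l s
                * fderiv ℝ (fun z => J (u z) β α) x (stdBasisQ m l)
                * fderiv ℝ u x (stdBasisQ m s) α
              + multCoeff m Quat.k l s
                * fderiv ℝ (fun z => K (u z) β α) x (stdBasisQ m l)
                * fderiv ℝ u x (stdBasisQ m s) α) := by
  intro x hx β
  have hx2 : ContDiffAt ℝ 2 u x := hu.contDiffAt (hU.mem_nhds hx)
  have hfd : DifferentiableAt ℝ (fderiv ℝ u) x :=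
    (hx2.fderiv_right (m := 1) (by norm_num)).differentiableAt (by norm_num)
  have hdu : DifferentiableAt ℝ u x := hx2.differentiableAt (by norm_num)
  have hMc : ∀ (M : (Fin Q → ℝ) → Fin Q → Fin Q → ℝ), ContDiff ℝ 1 M →
      ∀ α : Fin Q, DifferentiableAt ℝ (fun z => M (u z) β α) x := by
    intro M hM α
    have h1 : ContDiff ℝ 1 (fun y => M y β α) := contDiff_pi.mp (contDiff_pi.mp hM β) α
    exact ((h1.differentiable (by norm_num)) (u x)).comp x hdu
  have hDdiff : ∀ (s : Fin m × Fin 4) (α : Fin Q),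
      DifferentiableAt ℝ (fun z => fderiv ℝ u z (stdBasisQ m s) α) x :=
    fun s α => helper1 hfd _ _
  have hexp : ∀ (q : ℍ[ℝ]) (z : Fin m → ℍ[ℝ]) (l : Fin m × Fin 4) (α : Fin Q),
      fderiv ℝ u z (fun n => q * stdBasisQ m l n) α
        = ∑ s : Fin m × Fin 4, multCoeff m q l s * fderiv ℝ u z (stdBasisQ m s) α := by
    intro q z l α
    rw [mul_expand m q l, map_sum]
    simp [Finset.sum_apply]
  have hFG : ∀ l : Fin m × Fin 4,
      (fun z => fderiv ℝ u z (stdBasisQ m l) β) =ᶠ[nhds x]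
      (fun z => ∑ s : Fin m × Fin 4, ∑ α : Fin Q,
        (multCoeff m Quat.i l s * (I (u z) β α * fderiv ℝ u z (stdBasisQ m s) α)
         + multCoeff m Quat.j l s * (J (u z) β α * fderiv ℝ u z (stdBasisQ m s) α)
         + multCoeff m Quat.k l s * (K (u z) β α * fderiv ℝ u z (stdBasisQ m s) α))) := by
    intro l
    refine Filter.eventuallyEq_of_mem (hU.mem_nhds hx) (fun z hz => ?_)
    have ht := htri z hz (stdBasisQ m l) β
    simp only [hexp] at ht
    rw [ht]
    have swap : ∀ (M : (Fin Q → ℝ) → Fin Q → Fin Q → ℝ) (q : ℍ[ℝ]),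
        (∑ α : Fin Q, M (u z) β α *
            ∑ s : Fin m × Fin 4, multCoeff m q l s * fderiv ℝ u z (stdBasisQ m s) α)
          = ∑ s : Fin m × Fin 4, ∑ α : Fin Q,
              multCoeff m q l s * (M (u z) β α * fderiv ℝ u z (stdBasisQ m s) α) := by
      intro M q
      simp_rw [Finset.mul_sum]
      rw [Finset.sum_comm]
      exact Finset.sum_congr rfl fun s _ => Finset.sum_congr rfl fun α _ => by ring
    rw [swap I Quat.i, swap J Quat.j, swap K Quat.k]
    simp [Finset.sum_add_distrib]
  have hstep : ∀ l : Fin m × Fin 4,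
      fderiv ℝ (fun z => fderiv ℝ u z (stdBasisQ m l) β) x (stdBasisQ m l)
        = ∑ s : Fin m × Fin 4, ∑ α : Fin Q,
            ((multCoeff m Quat.i l s
                * fderiv ℝ (fun z => I (u z) β α) x (stdBasisQ m l)
                * fderiv ℝ u x (stdBasisQ m s) α
              + multCoeff m Quat.j l s
                * fderiv ℝ (fun z => J (u z) β α) x (stdBasisQ m l)
                * fderiv ℝ u x (stdBasisQ m s) α
              + multCoeff m Quat.k l s
                * fderiv ℝ (fun z => K (u z) β α) x (stdBasisQ m l)
                * fderiv ℝ u x (stdBasisQ m s) α)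
             + (multCoeff m Quat.i l s * (I (u x) β α
                  * fderiv ℝ (fun z => fderiv ℝ u z (stdBasisQ m s) α) x (stdBasisQ m l))
               + multCoeff m Quat.j l s * (J (u x) β α
                  * fderiv ℝ (fun z => fderiv ℝ u z (stdBasisQ m s) α) x (stdBasisQ m l))
               + multCoeff m Quat.k l s * (K (u x) β α
                  * fderiv ℝ (fun z => fderiv ℝ u z (stdBasisQ m s) α) x (stdBasisQ m l)))) := by
    intro l
    rw [(hFG l).fderiv_eq]
    rw [fderiv_fun_sum (fun s _ => DifferentiableAt.fun_sum (fun α _ =>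
      diff_three (hMc I hI α) (hMc J hJ α) (hMc K hK α) (hDdiff s α) _ _ _))]
    rw [ContinuousLinearMap.sum_apply]
    refine Finset.sum_congr rfl fun s _ => ?_
    rw [fderiv_fun_sum (fun α _ =>
      diff_three (hMc I hI α) (hMc J hJ α) (hMc K hK α) (hDdiff s α) _ _ _)]
    rw [ContinuousLinearMap.sum_apply]
    refine Finset.sum_congr rfl fun α _ => ?_
    rw [fderiv_three (hMc I hI α) (hMc J hJ α) (hMc K hK α) (hDdiff s α)]
  rw [Finset.sum_congr rfl fun l _ => hstep l]
  simp only [Finset.sum_add_distrib]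
  have hzero : ∀ (q : ℍ[ℝ]), q.re = 0 → ∀ (M : (Fin Q → ℝ) → Fin Q → Fin Q → ℝ),
      (∑ l : Fin m × Fin 4, ∑ s : Fin m × Fin 4, ∑ α : Fin Q,
        multCoeff m q l s * (M (u x) β α
          * fderiv ℝ (fun z => fderiv ℝ u z (stdBasisQ m s) α) x (stdBasisQ m l))) = 0 := by
    intro q hq M
    exact antisym_sum3 (multCoeff m q) (fun α => M (u x) β α)
      (fun l s α => fderiv ℝ (fun z => fderiv ℝ u z (stdBasisQ m s) α) x (stdBasisQ m l))
      (multCoeff_antisymm m q hq) (fun l s α => hsym hx2 _ _ _)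
  rw [hzero Quat.i rfl I, hzero Quat.j rfl J, hzero Quat.k rfl K]
  ring
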